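/- Let t(n) denote the number of λυ-terms of size n and s(n) the number of explicit substitutions of size n, where sizes are defined by: an index 'n' has size n+1, abstraction and application add 1, closure a[s] has size 1+|a|+|s|, slash a/ has size 1+|a|, lift ⇑(s) has size 1+|s|, shift ↑ has size 1. Then t(0)=0 and for n ≥ 1, t(n) equals the n-th Catalan number C(n) = (1/(n+1))·binom(2n,n). -/

import Mathlib

open Finset Filter

mutual
inductive Tm : Type
  | idx : Nat → Tm
  | lam : Tm → Tm
  | app : Tm → Tm → Tm
  | clos : Tm → Subst → Tm
inductive Subst : Type
  | slash : Tm → Subst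
  | lift : Subst → Subst
  | shift : Subst
end

mutual
/-- Natural size of a λυ-term: every constructor weighs 1; index n has size n+1. -/
def Tm.size : Tm → Nat
  | .idx n => n + 1
  | .lam a => Tm.size a + 1
  | .app a b => Tm.size a + Tm.size b + 1
  | .clos a s => Tm.size a + Subst.size s + 1
/-- Natural size of an explicit substitution. -/
def Subst.size : Subst → Nat
  | .slash a => Tm.size a + 1
  | .lift s => Subst.size s + 1
  | .shift => 1
end


def enum : Nat → List Tm × List Subst
  | 0 => ([], [])
  | n+1 =>
      ([Tm.idx n]
        ++ (enum n).1.map Tm.lam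
        ++ ((List.range (n+1)).attach.flatMap fun p =>
              (enum p.1).1.flatMap fun a => (enum (n - p.1)).1.map fun b => Tm.app a b)
        ++ ((List.range (n+1)).attach.flatMap fun p =>
              (enum p.1).1.flatMap fun a => (enum (n - p.1)).2.map fun s => Tm.clos a s),
       (enum n).1.map Subst.slash ++ (enum n).2.map Subst.lift
        ++ (if n = 0 then [Subst.shift] else []))
  termination_by n => n
  decreasing_by all_goals first | omega | (have := p.2; simp only [List.mem_range] at this; omega)

theorem size_of_mem : ∀ n : ℕ, (∀ a ∈ (enum n).1, Tm.size a = n) ∧ (∀ s ∈ (enum n).2, Subst.size s = n) := by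
  intro n
  induction n using Nat.strong_induction_on with
  | _ n ih =>
    match n with
    | 0 => simp [enum]
    | n+1 =>
      constructor
      · intro a ha
        simp only [enum, List.mem_append, List.mem_map, List.mem_flatMap, List.mem_attach,
          List.mem_singleton, true_and, Subtype.exists, List.mem_range] at ha
        rcases ha with (((rfl | ⟨b, hb, rfl⟩) | ⟨i, hi, b, hb, c, hc, rfl⟩) | ⟨i, hi, b, hb, c, hc, rfl⟩)
        · simp [Tm.size]
        · have := (ih n (by omega)).1 b hb; simp [Tm.size]; omega
        · have h1 := (ih i hi).1 b hb
          have h2 := (ih (n - i) (by omega)).1 c hc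
          simp [Tm.size]; omega
        · have h1 := (ih i hi).1 b hb
          have h2 := (ih (n - i) (by omega)).2 c hc
          simp [Tm.size]; omega
      · intro s hs
        simp only [enum, List.mem_append, List.mem_map] at hs
        rcases hs with ((⟨b, hb, rfl⟩ | ⟨b, hb, rfl⟩) | hs)
        · have := (ih n (by omega)).1 b hb; simp [Subst.size]; omega
        · have := (ih n (by omega)).2 b hb; simp [Subst.size]; omega
        · by_cases h : n = 0 <;> simp [h] at hs <;> subst hs <;> simp_all [Subst.size]

mutual
theorem tm_mem_enum : ∀ a : Tm, a ∈ (enum a.size).1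
  | .idx n => by simp [Tm.size, enum]
  | .lam a => by
      have := tm_mem_enum a
      simp only [Tm.size, enum, List.mem_append, List.mem_map]
      exact Or.inl (Or.inl (Or.inr ⟨a, this, rfl⟩))
  | .app a b => by
      have ha := tm_mem_enum a
      have hb := tm_mem_enum b
      simp only [Tm.size, enum, List.mem_append, List.mem_flatMap, List.mem_attach,
        List.mem_map, true_and, Subtype.exists, List.mem_range]
      refine Or.inl (Or.inr ⟨a.size, by omega, a, ha, b, ?_, rfl⟩)
      have : a.size + b.size - a.size = b.size := by omega
      rwa [this]
  | .clos a s => by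
      have ha := tm_mem_enum a
      have hs := subst_mem_enum s
      simp only [Tm.size, enum, List.mem_append, List.mem_flatMap, List.mem_attach,
        List.mem_map, true_and, Subtype.exists, List.mem_range]
      refine Or.inr ⟨a.size, by omega, a, ha, s, ?_, rfl⟩
      have : a.size + s.size - a.size = s.size := by omega
      rwa [this]
theorem subst_mem_enum : ∀ s : Subst, s ∈ (enum s.size).2
  | .slash a => by
      have := tm_mem_enum a
      simp only [Subst.size, enum, List.mem_append, List.mem_map]
      exact Or.inl (Or.inl ⟨a, this, rfl⟩)
  | .lift s => by
      have := subst_mem_enum s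
      simp only [Subst.size, enum, List.mem_append, List.mem_map]
      exact Or.inl (Or.inr ⟨s, this, rfl⟩)
  | .shift => by simp [Subst.size, enum]
end

theorem enum_nodup : ∀ n : ℕ, (enum n).1.Nodup ∧ (enum n).2.Nodup := by
  intro n
  induction n using Nat.strong_induction_on with
  | _ n ih =>
    match n with
    | 0 => simp [enum]
    | n+1 =>
      have hterm : ∀ m < n + 1, (enum m).1.Nodup := fun m hm => (ih m hm).1
      have hsub : ∀ m < n + 1, (enum m).2.Nodup := fun m hm => (ih m hm).2
      have hC : (((List.range (n+1)).attach.flatMap fun (p : {x // x ∈ List.range (n+1)}) =>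
              (enum p.1).1.flatMap fun a => (enum (n - p.1)).1.map fun b => Tm.app a b)).Nodup := by
        rw [List.nodup_flatMap]
        constructor
        · rintro ⟨i, hi⟩ -
          rw [List.mem_range] at hi
          rw [List.nodup_flatMap]
          refine ⟨fun a _ => (hterm (n-i) (by omega)).map (fun x y h => by simpa using h), ?_⟩
          refine (hterm i hi).pairwise_of_forall_ne ?_
          intro a _ b _ hab
          rw [Function.onFun, List.disjoint_left]
          rintro x hx hy
          simp only [List.mem_map] at hx hy
          obtain ⟨c, _, rfl⟩ := hx
          obtain ⟨d, _, h⟩ := hy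
          exact hab (by injection h.symm)
        · refine (List.nodup_attach.2 List.nodup_range).pairwise_of_forall_ne ?_
          rintro ⟨i, hi⟩ - ⟨j, hj⟩ - hij
          rw [List.mem_range] at hi hj
          have hij' : i ≠ j := fun h => hij (by simpa using h)
          rw [Function.onFun, List.disjoint_left]
          rintro x hx hy
          simp only [List.mem_flatMap, List.mem_map] at hx hy
          obtain ⟨a, ha, b, hb, rfl⟩ := hx
          obtain ⟨c, hc, d, hd, h⟩ := hy
          have h1 := (size_of_mem i).1 a ha
          have h2 := (size_of_mem j).1 c hc
          injection h.symm with h3 h4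
          exact hij' (by rw [← h1, ← h2, h3])
      have hD : (((List.range (n+1)).attach.flatMap fun (p : {x // x ∈ List.range (n+1)}) =>
              (enum p.1).1.flatMap fun a => (enum (n - p.1)).2.map fun s => Tm.clos a s)).Nodup := by
        rw [List.nodup_flatMap]
        constructor
        · rintro ⟨i, hi⟩ -
          rw [List.mem_range] at hi
          rw [List.nodup_flatMap]
          refine ⟨fun a _ => (hsub (n-i) (by omega)).map (fun x y h => by simpa using h), ?_⟩
          refine (hterm i hi).pairwise_of_forall_ne ?_
          intro a _ b _ hab
          rw [Function.onFun, List.disjoint_left]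
          rintro x hx hy
          simp only [List.mem_map] at hx hy
          obtain ⟨c, _, rfl⟩ := hx
          obtain ⟨d, _, h⟩ := hy
          exact hab (by injection h.symm)
        · refine (List.nodup_attach.2 List.nodup_range).pairwise_of_forall_ne ?_
          rintro ⟨i, hi⟩ - ⟨j, hj⟩ - hij
          rw [List.mem_range] at hi hj
          have hij' : i ≠ j := fun h => hij (by simpa using h)
          rw [Function.onFun, List.disjoint_left]
          rintro x hx hy
          simp only [List.mem_flatMap, List.mem_map] at hx hy
          obtain ⟨a, ha, b, hb, rfl⟩ := hx
          obtain ⟨c, hc, d, hd, h⟩ := hy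
          have h1 := (size_of_mem i).1 a ha
          have h2 := (size_of_mem j).1 c hc
          injection h.symm with h3 h4
          exact hij' (by rw [← h1, ← h2, h3])
      simp only [enum]
      constructor
      ·
        refine List.Nodup.append (List.Nodup.append (List.Nodup.append ?_ ?_ ?_) hC ?_) hD ?_
        · simp
        · exact (hterm n (by omega)).map (fun x y h => by simpa using h)
        · intro x hx hy
          simp only [List.mem_singleton] at hx
          subst hx
          simp only [List.mem_map] at hy
          obtain ⟨a, _, h⟩ := hy
          exact Tm.noConfusion h
        · intro x hx hy
          simp only [List.mem_append, List.mem_singleton, List.mem_map,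
            List.mem_flatMap] at hx hy
          obtain ⟨i, -, a, -, b, -, rfl⟩ := hy
          rcases hx with h | ⟨c, -, h⟩ <;> exact Tm.noConfusion h
        · intro x hx hy
          simp only [List.mem_append, List.mem_singleton, List.mem_map,
            List.mem_flatMap] at hx hy
          obtain ⟨i, -, a, -, b, -, rfl⟩ := hy
          rcases hx with (h | ⟨c, -, h⟩) | ⟨j, -, c, -, d, -, h⟩ <;> exact Tm.noConfusion h
      ·
        refine List.Nodup.append (List.Nodup.append ?_ ?_ ?_) ?_ ?_
        · exact (hterm n (by omega)).map (fun x y h => by simpa using h)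
        · exact (hsub n (by omega)).map (fun x y h => by simpa using h)
        · intro x hx hy
          simp only [List.mem_map] at hx hy
          obtain ⟨a, _, rfl⟩ := hx
          obtain ⟨b, _, h⟩ := hy
          exact Subst.noConfusion h
        · split <;> simp
        · intro x hx hy
          simp only [List.mem_append, List.mem_map] at hx
          split at hy
          · simp only [List.mem_singleton] at hy
            subst hy
            rcases hx with ⟨a, _, h⟩ | ⟨a, _, h⟩ <;> exact Subst.noConfusion h
          · simp at hy

/-- Number of λυ-terms of size `n`. -/
noncomputable def tcount (n : ℕ) : ℕ := Nat.card {a : Tm // Tm.size a = n}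

/-- Number of explicit substitutions of size `n`. -/
noncomputable def scount (n : ℕ) : ℕ := Nat.card {s : Subst // Subst.size s = n}


theorem tcount_eq (n : ℕ) : tcount n = (enum n).1.length := by
  classical
  rw [tcount]
  rw [Nat.card_congr (Equiv.subtypeEquivRight
    (fun a => ⟨fun h => h ▸ tm_mem_enum a, fun h => (size_of_mem n).1 a h⟩) :
    {a : Tm // Tm.size a = n} ≃ {a : Tm // a ∈ (enum n).1})]
  rw [Nat.card_congr (Equiv.subtypeEquivRight (fun a => (List.mem_toFinset).symm) :
    {a : Tm // a ∈ (enum n).1} ≃ {a : Tm // a ∈ (enum n).1.toFinset})]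
  rw [Nat.card_eq_finsetCard, List.toFinset_card_of_nodup (enum_nodup n).1]

theorem scount_eq (n : ℕ) : scount n = (enum n).2.length := by
  classical
  rw [scount]
  rw [Nat.card_congr (Equiv.subtypeEquivRight
    (fun s => ⟨fun h => h ▸ subst_mem_enum s, fun h => (size_of_mem n).2 s h⟩) :
    {s : Subst // Subst.size s = n} ≃ {s : Subst // s ∈ (enum n).2})]
  rw [Nat.card_congr (Equiv.subtypeEquivRight (fun s => (List.mem_toFinset).symm) :
    {s : Subst // s ∈ (enum n).2} ≃ {s : Subst // s ∈ (enum n).2.toFinset})]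
  rw [Nat.card_eq_finsetCard, List.toFinset_card_of_nodup (enum_nodup n).2]

theorem list_range_sum (n : ℕ) (f : ℕ → ℕ) :
    ((List.range n).map f).sum = ∑ i ∈ Finset.range n, f i := by
  induction n with
  | zero => simp
  | succ n ih =>
      rw [List.range_succ, List.map_append, List.sum_append, Finset.sum_range_succ, ih]
      simp

theorem attach_sum {α : Type*} (l : List α) (f : α → ℕ) :
    (l.attach.map (fun p => f p.1)).sum = (l.map f).sum := by
  rw [show (fun p : {x // x ∈ l} => f p.1) = f ∘ Subtype.val from rfl, ← List.map_map,
    List.attach_map_subtype_val]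

theorem tcount_zero : tcount 0 = 0 := by rw [tcount_eq]; simp [enum]

theorem scount_zero : scount 0 = 0 := by rw [scount_eq]; simp [enum]

theorem tcount_succ (n : ℕ) : tcount (n+1) = 1 + tcount n
    + ∑ i ∈ Finset.range (n+1), tcount i * tcount (n-i)
    + ∑ i ∈ Finset.range (n+1), tcount i * scount (n-i) := by
  simp only [tcount_eq, scount_eq]
  simp only [enum]
  simp only [List.length_append, List.length_map, List.length_singleton,
    List.length_flatMap, Function.comp_def, List.map_const', List.sum_replicate,
    smul_eq_mul]
  rw [attach_sum (List.range (n+1)) (fun i => (enum i).1.length * (enum (n - i)).1.length),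
      attach_sum (List.range (n+1)) (fun i => (enum i).1.length * (enum (n - i)).2.length),
      list_range_sum, list_range_sum]

theorem scount_succ (n : ℕ) : scount (n+1) = tcount n + scount n
    + (if n = 0 then 1 else 0) := by
  simp only [tcount_eq, scount_eq]
  simp only [enum]
  simp only [List.length_append, List.length_map]
  split <;> simp

open Finset in
theorem key_sum (n : ℕ) :
    (∑ i ∈ range (n+1), catalan i * ∑ k ∈ range (n-i), catalan k) + 1
      = ∑ k ∈ range (n+1), catalan k := by
  induction n with
  | zero => simp
  | succ n ih =>
      rw [Finset.sum_range_succ (fun i => catalan i * ∑ k ∈ range (n+1-i), catalan k)]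
      have h1 : ∀ i ∈ range (n+1), catalan i * ∑ k ∈ range (n+1-i), catalan k
          = catalan i * ∑ k ∈ range (n-i), catalan k + catalan i * catalan (n-i) := by
        intro i hi
        rw [Finset.mem_range] at hi
        have : n + 1 - i = (n - i) + 1 := by omega
        rw [this, Finset.sum_range_succ, Nat.mul_add]
      rw [Finset.sum_congr rfl h1, Finset.sum_add_distrib]
      have h2 : n + 1 - (n + 1) = 0 := by omega
      rw [h2]
      simp only [Finset.range_zero, Finset.sum_empty, Nat.mul_zero, Nat.add_zero]
      rw [Finset.sum_range_succ (fun k => catalan k)]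
      have h3 : ∑ x ∈ range (n+1), catalan x * catalan (n-x) = catalan (n+1) := by
        rw [catalan_succ n, Finset.sum_range]
      omega

open Finset in
theorem catA (n : ℕ) :
    ∑ i ∈ range (n+1), (if i = 0 then 0 else catalan i) * (if n - i = 0 then 0 else catalan (n-i))
      + ((if n = 0 then 0 else catalan n) + (if n = 0 then 0 else catalan n) + (if n = 0 then 1 else 0))
      = catalan (n+1) := by
  have h0 : catalan (n+1) = ∑ i ∈ range (n+1), catalan i * catalan (n-i) := by
    rw [catalan_succ, Finset.sum_range]
  have hpt : ∀ i ∈ range (n+1), catalan i * catalan (n-i)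
      = (if i = 0 then 0 else catalan i) * (if n - i = 0 then 0 else catalan (n-i))
        + ((if i = n then (if n = 0 then 0 else catalan n) else 0)
        + (if i = 0 then (if n = 0 then 0 else catalan n) else 0)
        + (if i = 0 then (if n = 0 then 1 else 0) else 0)) := by
    intro i hi
    rw [Finset.mem_range] at hi
    by_cases h1 : i = 0
    · subst h1
      by_cases h2 : n = 0
      · subst h2; simp
      · simp [h2, Ne.symm h2, catalan_zero]
    · have h3 : i ≠ n → n - i ≠ 0 := by omega
      have h4 : n ≠ 0 := by omega
      by_cases h2 : i = n
      · subst h2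
        simp [h1, h4, Nat.sub_self, catalan_zero]
      · simp [h1, h2, h3 h2, h4]
  rw [Finset.sum_congr rfl hpt, Finset.sum_add_distrib, Finset.sum_add_distrib,
    Finset.sum_add_distrib] at h0
  have e1 : ∑ i ∈ range (n+1), (if i = n then (if n = 0 then 0 else catalan n) else 0)
      = (if n = 0 then 0 else catalan n) := by
    rw [Finset.sum_ite_eq' (range (n+1)) n fun _ => (if n = 0 then 0 else catalan n)]
    simp
  have e2 : ∑ i ∈ range (n+1), (if i = 0 then (if n = 0 then 0 else catalan n) else 0)
      = (if n = 0 then 0 else catalan n) := by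
    rw [Finset.sum_ite_eq' (range (n+1)) 0 fun _ => (if n = 0 then 0 else catalan n)]
    simp
  have e3 : ∑ i ∈ range (n+1), (if i = 0 then (if n = 0 then 1 else 0) else 0)
      = (if n = 0 then 1 else 0) := by
    rw [Finset.sum_ite_eq' (range (n+1)) 0 fun _ => (if n = 0 then 1 else 0)]
    simp
  rw [e1, e2, e3] at h0
  omega

open Finset in
theorem catB (n : ℕ) :
    ∑ i ∈ range (n+1), (if i = 0 then 0 else catalan i) * (∑ k ∈ range (n-i), catalan k) + 1
      = catalan n := by
  have h0 := key_sum n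
  have hpt : ∀ i ∈ range (n+1), catalan i * (∑ k ∈ range (n-i), catalan k)
      = (if i = 0 then 0 else catalan i) * (∑ k ∈ range (n-i), catalan k)
        + (if i = 0 then (∑ k ∈ range n, catalan k) else 0) := by
    intro i _
    by_cases h1 : i = 0
    · subst h1; simp [catalan_zero]
    · simp [h1]
  have e1 : ∑ i ∈ range (n+1), (if i = 0 then (∑ k ∈ range n, catalan k) else 0)
      = ∑ k ∈ range n, catalan k := by
    rw [Finset.sum_ite_eq' (range (n+1)) 0 fun _ => (∑ k ∈ range n, catalan k)]
    simp
  have hsplit : ∑ i ∈ range (n+1), catalan i * ∑ k ∈ range (n-i), catalan k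
      = (∑ i ∈ range (n+1), (if i = 0 then 0 else catalan i) * ∑ k ∈ range (n-i), catalan k)
        + ∑ k ∈ range n, catalan k := by
    rw [Finset.sum_congr rfl hpt, Finset.sum_add_distrib, e1]
  have hlast : ∑ k ∈ range (n+1), catalan k = (∑ k ∈ range n, catalan k) + catalan n :=
    Finset.sum_range_succ _ n
  omega

open Finset in
theorem main_count : ∀ n : ℕ, tcount n = (if n = 0 then 0 else catalan n)
    ∧ scount n = ∑ k ∈ range n, catalan k := by
  intro n
  induction n using Nat.strong_induction_on with
  | _ n ih =>
    match n with
    | 0 => simp [tcount_zero, scount_zero]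
    | n+1 =>
      have iht : ∀ m, m ≤ n → tcount m = (if m = 0 then 0 else catalan m) :=
        fun m hm => (ih m (by omega)).1
      have ihs : ∀ m, m ≤ n → scount m = ∑ k ∈ range m, catalan k :=
        fun m hm => (ih m (by omega)).2
      have hcat : catalan n = (if n = 0 then 0 else catalan n) + (if n = 0 then 1 else 0) := by
        by_cases h : n = 0 <;> simp [h]
      constructor
      · rw [tcount_succ, iht n le_rfl]
        have e1 : ∑ i ∈ range (n+1), tcount i * tcount (n-i)
            = ∑ i ∈ range (n+1), (if i = 0 then 0 else catalan i)
                * (if n - i = 0 then 0 else catalan (n-i)) := by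
          refine Finset.sum_congr rfl fun i hi => ?_
          rw [Finset.mem_range] at hi
          rw [iht i (by omega), iht (n-i) (by omega)]
        have e2 : ∑ i ∈ range (n+1), tcount i * scount (n-i)
            = ∑ i ∈ range (n+1), (if i = 0 then 0 else catalan i)
                * (∑ k ∈ range (n-i), catalan k) := by
          refine Finset.sum_congr rfl fun i hi => ?_
          rw [Finset.mem_range] at hi
          rw [iht i (by omega), ihs (n-i) (by omega)]
        rw [e1, e2]
        have hA := catA n
        have hB := catB n
        simp only [Nat.add_eq_zero, Nat.succ_ne_zero, and_false, if_false, ite_false]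
        omega
      · rw [scount_succ, iht n le_rfl, ihs n le_rfl, Finset.sum_range_succ]
        omega


/-- t(0)=0 and for n ≥ 1, t(n) is the n-th Catalan number binom(2n,n)/(n+1). -/
theorem stmt0 :
    tcount 0 = 0 ∧ ∀ n : ℕ, 1 ≤ n → tcount n = (Nat.choose (2 * n) n) / (n + 1) := by
  refine ⟨tcount_zero, fun n hn => ?_⟩
  have h1 := (main_count n).1
  have h2 : n ≠ 0 := by omega
  rw [h1, if_neg h2, catalan_eq_centralBinom_div, Nat.centralBinom]
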